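/- arXiv:2005.01271 — 4 statements merged into one kernel-verified Lean document; each statement's English description precedes it below -/
import Mathlib

section
/- Let v : ℝ² → ℝ² be twice continuously differentiable and let τ := sym curl v, defined pointwise from the classical partial derivatives of v. Let n = (n₁, n₂) ∈ ℝ² be a unit vector and set t := (−n₂, n₁). Then at every point of ℝ²: D_t(tᵀ τ n) + nᵀ (div τ) = D_t(tᵀ D_t v), where div τ is the row-wise divergence (div τ)ᵢ = ∂₁τ_{i1} + ∂₂τ_{i2}. -/
open Matrix

/-- The matrix `curl v` at a point `y`, defined row-wise from the classical
partial derivatives of `v`: `(curl v)_{i1} = ∂₂ vᵢ`, `(curl v)_{i2} = -∂₁ vᵢ`. -/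
noncomputable def curlMat (v : (Fin 2 → ℝ) → (Fin 2 → ℝ)) (y : Fin 2 → ℝ) :
    Matrix (Fin 2) (Fin 2) ℝ :=
  Matrix.of fun i j =>
    if j = 0 then fderiv ℝ v y (Pi.single (1 : Fin 2) 1) i
    else -(fderiv ℝ v y (Pi.single (0 : Fin 2) 1) i)

/-- `sym curl v := (curl v + (curl v)ᵀ)/2`, pointwise. -/
noncomputable def symCurlMat (v : (Fin 2 → ℝ) → (Fin 2 → ℝ)) (y : Fin 2 → ℝ) :
    Matrix (Fin 2) (Fin 2) ℝ :=
  (1 / 2 : ℝ) • (curlMat v y + (curlMat v y)ᵀ)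

/-- The row-wise divergence of the matrix field `z ↦ symCurlMat v z`:
`(div τ)ᵢ = ∂₁ τ_{i1} + ∂₂ τ_{i2}`. -/
noncomputable def divSymCurl (v : (Fin 2 → ℝ) → (Fin 2 → ℝ)) (y : Fin 2 → ℝ) :
    Fin 2 → ℝ := fun i =>
  fderiv ℝ (fun z => symCurlMat v z i 0) y (Pi.single (0 : Fin 2) 1) +
    fderiv ℝ (fun z => symCurlMat v z i 1) y (Pi.single (1 : Fin 2) 1)

theorem stmt_1 (v : (Fin 2 → ℝ) → (Fin 2 → ℝ)) (hv : ContDiff ℝ 2 v)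
    (n : Fin 2 → ℝ) (hn : n 0 ^ 2 + n 1 ^ 2 = 1) (y : Fin 2 → ℝ) :
    fderiv ℝ (fun z => (![-(n 1), n 0] : Fin 2 → ℝ) ⬝ᵥ (symCurlMat v z).mulVec n) y
        ![-(n 1), n 0]
      + n ⬝ᵥ divSymCurl v y
    = fderiv ℝ
        (fun z => (![-(n 1), n 0] : Fin 2 → ℝ) ⬝ᵥ fderiv ℝ v z ![-(n 1), n 0]) y
        ![-(n 1), n 0] := by
  have hd : Differentiable ℝ v := hv.differentiable (by norm_num)
  have hv' : ContDiff ℝ 1 (fderiv ℝ v) := hv.fderiv_right (m := 1) (by norm_num)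
  have hdiff : DifferentiableAt ℝ (fderiv ℝ v) y := (hv'.differentiable one_ne_zero) y
  set e0 : Fin 2 → ℝ := Pi.single (0 : Fin 2) 1 with he0
  set e1 : Fin 2 → ℝ := Pi.single (1 : Fin 2) 1 with he1
  set H : (Fin 2 → ℝ) →L[ℝ] (Fin 2 → ℝ) →L[ℝ] (Fin 2 → ℝ) := fderiv ℝ (fderiv ℝ v) y
    with hH
  have hsymm : ∀ a b : Fin 2 → ℝ, H a b = H b a := fun a b =>
    second_derivative_symmetric (fun z => (hd z).hasFDerivAt) hdiff.hasFDerivAt a b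
  -- derivative of the basic coordinate functions
  have hg : ∀ (w : Fin 2 → ℝ) (i : Fin 2), HasFDerivAt (fun z => fderiv ℝ v z w i)
      (((ContinuousLinearMap.proj (R := ℝ) (φ := fun _ : Fin 2 => ℝ) i).comp
        (ContinuousLinearMap.apply ℝ (Fin 2 → ℝ) w)).comp H) y := by
    intro w i
    exact (((ContinuousLinearMap.proj (R := ℝ) (φ := fun _ : Fin 2 => ℝ) i).comp
      (ContinuousLinearMap.apply ℝ (Fin 2 → ℝ) w)).hasFDerivAt).comp y hdiff.hasFDerivAt
  have main : ∀ (a b c d : ℝ) (u : Fin 2 → ℝ),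
      fderiv ℝ (fun z => a * fderiv ℝ v z e0 0 + b * fderiv ℝ v z e0 1
        + c * fderiv ℝ v z e1 0 + d * fderiv ℝ v z e1 1) y u
      = a * H u e0 0 + b * H u e0 1 + c * H u e1 0 + d * H u e1 1 := by
    intro a b c d u
    have h := (((((hg e0 0).const_mul a).add ((hg e0 1).const_mul b)).add
      ((hg e1 0).const_mul c)).add ((hg e1 1).const_mul d)).fderiv
    simp only [Pi.add_def] at h
    rw [h]
    simp [ContinuousLinearMap.add_apply, ContinuousLinearMap.smul_apply,
      ContinuousLinearMap.comp_apply, ContinuousLinearMap.proj_apply,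
      ContinuousLinearMap.apply_apply, smul_eq_mul]
  -- linearity in the vector ![-(n 1), n 0]
  have ht : (![-(n 1), n 0] : Fin 2 → ℝ) = (-(n 1)) • e0 + (n 0) • e1 := by
    funext j; fin_cases j <;> simp [he0, he1]
  have hlin : ∀ (z : Fin 2 → ℝ) (i : Fin 2),
      fderiv ℝ v z (![-(n 1), n 0]) i
        = -(n 1) * fderiv ℝ v z e0 i + n 0 * fderiv ℝ v z e1 i := by
    intro z i
    rw [ht, map_add, (fderiv ℝ v z).map_smul, (fderiv ℝ v z).map_smul]
    simp
  have hlin2 : ∀ (w : Fin 2 → ℝ) (i : Fin 2),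
      H (![-(n 1), n 0]) w i = -(n 1) * H e0 w i + n 0 * H e1 w i := by
    intro w i
    rw [ht, map_add, H.map_smul, H.map_smul]
    simp
  -- canonical forms of the scalar functions appearing in the goal
  have hfun1 : (fun z => (![-(n 1), n 0] : Fin 2 → ℝ) ⬝ᵥ (symCurlMat v z).mulVec n)
      = fun z => ((n 1) ^ 2 - (n 0) ^ 2) / 2 * fderiv ℝ v z e0 0
        + (-(n 0 * n 1)) * fderiv ℝ v z e0 1 + (-(n 0 * n 1)) * fderiv ℝ v z e1 0
        + ((n 0) ^ 2 - (n 1) ^ 2) / 2 * fderiv ℝ v z e1 1 := by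
    funext z
    simp [symCurlMat, curlMat, dotProduct, Matrix.mulVec, Fin.sum_univ_two,
      Matrix.transpose_apply, he0, he1]
    ring
  have hfun3 : (fun z => (![-(n 1), n 0] : Fin 2 → ℝ) ⬝ᵥ fderiv ℝ v z ![-(n 1), n 0])
      = fun z => (n 1) ^ 2 * fderiv ℝ v z e0 0
        + (-(n 0 * n 1)) * fderiv ℝ v z e0 1 + (-(n 0 * n 1)) * fderiv ℝ v z e1 0
        + (n 0) ^ 2 * fderiv ℝ v z e1 1 := by
    funext z
    simp [dotProduct, Fin.sum_univ_two, hlin]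
    ring
  have ht00 : (fun z => symCurlMat v z 0 0)
      = fun z => (0 : ℝ) * fderiv ℝ v z e0 0 + 0 * fderiv ℝ v z e0 1
        + 1 * fderiv ℝ v z e1 0 + 0 * fderiv ℝ v z e1 1 := by
    funext z
    simp [symCurlMat, curlMat, Matrix.transpose_apply, he0, he1]
    ring
  have ht01 : (fun z => symCurlMat v z 0 1)
      = fun z => (-(1/2) : ℝ) * fderiv ℝ v z e0 0 + 0 * fderiv ℝ v z e0 1
        + 0 * fderiv ℝ v z e1 0 + (1/2) * fderiv ℝ v z e1 1 := by
    funext z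
    simp [symCurlMat, curlMat, Matrix.transpose_apply, he0, he1]
    ring
  have ht10 : (fun z => symCurlMat v z 1 0)
      = fun z => (-(1/2) : ℝ) * fderiv ℝ v z e0 0 + 0 * fderiv ℝ v z e0 1
        + 0 * fderiv ℝ v z e1 0 + (1/2) * fderiv ℝ v z e1 1 := by
    funext z
    simp [symCurlMat, curlMat, Matrix.transpose_apply, he0, he1]
    ring
  have ht11 : (fun z => symCurlMat v z 1 1)
      = fun z => (0 : ℝ) * fderiv ℝ v z e0 0 + (-1) * fderiv ℝ v z e0 1
        + 0 * fderiv ℝ v z e1 0 + 0 * fderiv ℝ v z e1 1 := by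
    funext z
    simp [symCurlMat, curlMat, Matrix.transpose_apply, he0, he1]
    ring
  have hsym0 : H e1 e0 0 = H e0 e1 0 := by rw [hsymm]
  have hsym1 : H e1 e0 1 = H e0 e1 1 := by rw [hsymm]
  rw [hfun1, hfun3]
  simp only [divSymCurl, ← he0, ← he1, dotProduct, Fin.sum_univ_two]
  rw [ht00, ht01, ht10, ht11]
  simp only [main, hlin2, hsym0, hsym1]
  linear_combination ((n 1 * H e0 e0 0 - n 0 * H e0 e1 0 + n 1 * H e0 e1 1
    - n 0 * H e1 e1 1) / 2) * hn
end

section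
/- Let k ≥ 2 be an integer. For every polynomial p of total degree at most k−2 there exists a symmetric polynomial matrix τ whose entries have total degree at most k such that div div τ = p. -/
open MvPolynomial Matrix

/-- Real polynomials in two variables. -/
abbrev P2 := MvPolynomial (Fin 2) ℝ

/-- The matrix `curl v` of a polynomial vector field, defined row-wise:
`(curl v)_{i1} = ∂₂ vᵢ`, `(curl v)_{i2} = -∂₁ vᵢ`. -/
noncomputable def pcurl (v : Fin 2 → P2) : Matrix (Fin 2) (Fin 2) P2 :=
  Matrix.of fun i j =>
    if j = 0 then pderiv (1 : Fin 2) (v i) else -(pderiv (0 : Fin 2) (v i))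

/-- `sym curl v := (curl v + (curl v)ᵀ)/2`. -/
noncomputable def psymCurl (v : Fin 2 → P2) : Matrix (Fin 2) (Fin 2) P2 :=
  (1 / 2 : ℝ) • (pcurl v + (pcurl v)ᵀ)

/-- `div div τ := Σ_{i,j} ∂ᵢ∂ⱼ τ_{ij}`. -/
noncomputable def pdivDiv (τ : Matrix (Fin 2) (Fin 2) P2) : P2 :=
  ∑ i : Fin 2, ∑ j : Fin 2, pderiv i (pderiv j (τ i j))

/-- The matrix `x xᵀ q` with `(i,j)`-entry `Xᵢ · Xⱼ · q`. -/
noncomputable def xxT (q : P2) : Matrix (Fin 2) (Fin 2) P2 :=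
  Matrix.of fun i j => X i * X j * q

/-- The polynomial vector `x^⊥ = (X₂, -X₁)`. -/
noncomputable def xPerp : Fin 2 → P2 := ![X 1, -X 0]

/-- `rot τ`, with components `(rot τ)ᵢ = ∂₁ τ_{i2} - ∂₂ τ_{i1}`. -/
noncomputable def prot (τ : Matrix (Fin 2) (Fin 2) P2) : Fin 2 → P2 :=
  fun i => pderiv (0 : Fin 2) (τ i 1) - pderiv (1 : Fin 2) (τ i 0)

/-- The Hessian matrix `∇²q` with entries `∂ᵢ∂ⱼ q`. -/
noncomputable def phess (q : P2) : Matrix (Fin 2) (Fin 2) P2 :=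
  Matrix.of fun i j => pderiv i (pderiv j q)

/-- `sym(x^⊥ ⊗ v)`, the symmetric matrix with `(i,j)`-entry
`((x^⊥)ᵢ vⱼ + vᵢ (x^⊥)ⱼ)/2`. -/
noncomputable def symTen (v : Fin 2 → P2) : Matrix (Fin 2) (Fin 2) P2 :=
  Matrix.of fun i j => (1 / 2 : ℝ) • (xPerp i * v j + v i * xPerp j)

/-- The gradient matrix `∇v` with entries `(∇v)_{ij} = ∂ⱼ vᵢ`. -/
noncomputable def pgrad (v : Fin 2 → P2) : Matrix (Fin 2) (Fin 2) P2 :=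
  Matrix.of fun i j => pderiv j (v i)

/-- The symmetric gradient `def v := (∇v + (∇v)ᵀ)/2`. -/
noncomputable def pdef (v : Fin 2 → P2) : Matrix (Fin 2) (Fin 2) P2 :=
  (1 / 2 : ℝ) • (pgrad v + (pgrad v)ᵀ)

/-- The matrix `x^⊥ (x^⊥)ᵀ q` with `(i,j)`-entry `(x^⊥)ᵢ (x^⊥)ⱼ q`. -/
noncomputable def xPerpxPerpT (q : P2) : Matrix (Fin 2) (Fin 2) P2 :=
  Matrix.of fun i j => xPerp i * xPerp j * q

/-- `rot rot τ := ∂₁(rot τ)₂ − ∂₂(rot τ)₁`. -/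
noncomputable def protRot (τ : Matrix (Fin 2) (Fin 2) P2) : P2 :=
  pderiv (0 : Fin 2) (prot τ 1) - pderiv (1 : Fin 2) (prot τ 0)

noncomputable def pinteg (p : P2) : P2 :=
  (AddMonoidAlgebra.coeff p).sum fun m c => monomial (m + Finsupp.single 0 1) (c / (m 0 + 1))

lemma pderiv_pinteg (p : P2) : pderiv (0 : Fin 2) (pinteg p) = p := by
  rw [pinteg, Finsupp.sum, map_sum]
  conv_rhs => rw [p.as_sum]
  refine Finset.sum_congr rfl fun m hm => ?_
  rw [pderiv_monomial]
  have h1 : ((m + Finsupp.single (0:Fin 2) 1) : Fin 2 →₀ ℕ) 0 = m 0 + 1 := by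
    simp
  have h2 : (m + Finsupp.single (0:Fin 2) 1) - Finsupp.single 0 1 = m := by
    simp
  rw [h1, h2]
  rw [MvPolynomial.coeff]
  congr 1
  push_cast
  field_simp

lemma totalDegree_pinteg (p : P2) : (pinteg p).totalDegree ≤ p.totalDegree + 1 := by
  rw [pinteg, Finsupp.sum]
  refine le_trans (totalDegree_finset_sum _ _) ?_
  rw [Finset.sup_le_iff]
  intro m hm
  refine le_trans (totalDegree_monomial_le _ _) ?_
  rw [Finsupp.sum_add_index (by simp) (by simp)]
  rw [Finsupp.sum_single_index rfl]
  exact add_le_add_left (le_totalDegree hm) 1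

/-- `div div` maps symmetric polynomial matrices of degree ≤ k onto
polynomials of degree ≤ k−2. -/
theorem stmt_4 (k : ℕ) (hk : 2 ≤ k) (p : P2) (hp : p.totalDegree ≤ k - 2) :
    ∃ τ : Matrix (Fin 2) (Fin 2) P2,
      τᵀ = τ ∧ (∀ i j, (τ i j).totalDegree ≤ k) ∧ pdivDiv τ = p := by
  set q := pinteg (pinteg p) with hq
  refine ⟨Matrix.of fun i j => if i = 0 ∧ j = 0 then q else 0, ?_, ?_, ?_⟩
  · ext i j; fin_cases i <;> fin_cases j <;> simp [Matrix.transpose]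
  · intro i j
    by_cases h : i = 0 ∧ j = 0
    · simp only [Matrix.of_apply, h, if_true]
      calc q.totalDegree ≤ (pinteg p).totalDegree + 1 := totalDegree_pinteg _
        _ ≤ p.totalDegree + 1 + 1 := add_le_add_left (totalDegree_pinteg _) 1
        _ ≤ (k - 2) + 2 := by omega
        _ = k := by omega
    · simp [Matrix.of_apply, h]
  · simp only [pdivDiv, Fin.sum_univ_two, Matrix.of_apply]
    norm_num
    rw [hq, pderiv_pinteg, pderiv_pinteg]
end

section
/- Let k ≥ 0 be an integer and let q be a homogeneous polynomial of degree k in two variables. Then div div (x xᵀ q) = (k+2)(k+3) q, where x xᵀ q denotes the symmetric polynomial matrix with entries Xᵢ·Xⱼ·q. -/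
open MvPolynomial Matrix

lemma key_stmt6 (i : Fin 2) (d : Fin 2 →₀ ℕ) (c : ℝ) :
    X i * pderiv i (monomial d c) = monomial d (c * d i) := by
  rw [pderiv_monomial, X, monomial_mul, one_mul]
  by_cases h : d i = 0
  · rw [h, Nat.cast_zero, mul_zero, map_zero, map_zero]
  · have hs : Finsupp.single i 1 + (d - Finsupp.single i 1) = d := by
      ext j
      rcases eq_or_ne j i with rfl | hj
      · simp only [Finsupp.coe_add, Pi.add_apply, Finsupp.single_eq_same, Finsupp.tsub_apply]
        omega
      · simp [Finsupp.single_apply, Ne.symm hj]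
    rw [hs]

lemma euler_stmt6 (k : ℕ) (q : P2) (hq : q.IsHomogeneous k) :
    X 0 * pderiv 0 q + X 1 * pderiv 1 q = (k : P2) * q := by
  conv_lhs => rw [q.as_sum]
  conv_rhs => rw [q.as_sum]
  rw [map_sum, map_sum, Finset.mul_sum, Finset.mul_sum, Finset.mul_sum, ← Finset.sum_add_distrib]
  refine Finset.sum_congr rfl fun d hd => ?_
  rw [key_stmt6, key_stmt6, ← map_add, ← mul_add]
  have hdeg : (d 0 : ℕ) + d 1 = k := by
    have h1 := hq (mem_support_iff.mp hd)
    rw [show (1 : Fin 2 → ℕ) = fun _ => 1 from rfl, ← Finsupp.degree_eq_weight_one] at h1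
    have : ∑ i : Fin 2, d i = d.degree := by
      refine (Finset.sum_subset (Finset.subset_univ _) fun x _ hx => ?_).symm
      simpa using Finsupp.notMem_support_iff.mp hx
    rw [Fin.sum_univ_two] at this
    rw [this]
    exact h1
  have : ((k : P2)) = C (k : ℝ) := by simp
  rw [this, C_mul_monomial]
  congr 1
  push_cast [← hdeg]
  ring

/-- For a homogeneous polynomial `q` of degree `k`,
`div div (x xᵀ q) = (k+2)(k+3) q`. -/
theorem stmt_6 (k : ℕ) (q : P2) (hq : q.IsHomogeneous k) :
    pdivDiv (xxT q) = (((k + 2) * (k + 3) : ℕ) : P2) * q := by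
  have h := euler_stmt6 k q hq
  have h0 := congrArg (pderiv (0 : Fin 2)) h
  have h1 := congrArg (pderiv (1 : Fin 2)) h
  simp only [map_add, Derivation.leibniz, pderiv_X, Pi.single_eq_same, Pi.single_eq_of_ne
    (by decide : (1:Fin 2) ≠ 0), Pi.single_eq_of_ne (by decide : (0:Fin 2) ≠ 1),
    smul_eq_mul, one_mul, zero_mul, mul_zero, add_zero, zero_add] at h0 h1
  have hk : ∀ i : Fin 2, pderiv i ((k : ℕ) : P2) = 0 := by
    intro i
    rw [← C_eq_coe_nat, pderiv_C]
  rw [hk, mul_zero, add_zero] at h0 h1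
  simp only [pdivDiv, xxT, Fin.sum_univ_two, Matrix.of_apply]
  simp only [pderiv_mul, pderiv_X, Pi.single_eq_same, Pi.single_eq_of_ne
    (by decide : (1:Fin 2) ≠ 0), Pi.single_eq_of_ne (by decide : (0:Fin 2) ≠ 1),
    map_add, one_mul, zero_mul, mul_zero, add_zero, zero_add, mul_one]
  push_cast
  linear_combination (X 0 : P2) * h0 + (X 1 : P2) * h1 + ((k : P2) + 5) * h
end

section
/- Let k ≥ 2 be an integer. For every polynomial p of total degree at most k−2 there exists a unique polynomial q of total degree at most k−2 such that div div (x xᵀ q) = p; that is, div div is a bijection from {x xᵀ q : q of total degree ≤ k−2} onto the polynomials of total degree at most k−2. -/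
open MvPolynomial Matrix

section auxStmt7

lemma aux7_finsupp_sub_eq_iff {s m : Fin 2 →₀ ℕ} {i : Fin 2} (h : 0 < s i) :
    s - Finsupp.single i 1 = m ↔ s = m + Finsupp.single i 1 := by
  constructor <;> intro hc <;> ext j
  · have h2 := Finsupp.ext_iff.mp hc j
    rw [Finsupp.tsub_apply] at h2
    rw [Finsupp.add_apply]
    rcases eq_or_ne i j with rfl | hj
    · simp [Finsupp.single_apply] at h2 ⊢
      omega
    · simp [Finsupp.single_apply, hj] at h2 ⊢
      omega
  · have h2 := Finsupp.ext_iff.mp hc j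
    rw [Finsupp.add_apply] at h2
    rw [Finsupp.tsub_apply]
    omega

lemma aux7_coeff_pderiv (i : Fin 2) (f : P2) (m : Fin 2 →₀ ℕ) :
    coeff m (pderiv i f) = (m i + 1 : ℝ) * coeff (m + Finsupp.single i 1) f := by
  induction f using MvPolynomial.induction_on' with
  | add f g hf hg => simp [hf, hg, mul_add]
  | monomial s a =>
    rw [pderiv_monomial, coeff_monomial, coeff_monomial]
    rcases Nat.eq_zero_or_pos (s i) with h | h
    · have h1 : s - Finsupp.single i 1 = s := by
        ext j
        rcases eq_or_ne i j with rfl | hj <;>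
          simp [Finsupp.tsub_apply, Finsupp.single_apply, *]
      have h2 : s ≠ m + Finsupp.single i 1 := by
        intro hc
        have := Finsupp.ext_iff.mp hc i
        simp [h] at this
      simp [h1, h2, h]
    · split_ifs with hc hd hd
      · have : s i = m i + 1 := by
          have := Finsupp.ext_iff.mp hd i; simpa using this
        rw [this]; push_cast; ring
      · exact absurd ((aux7_finsupp_sub_eq_iff h).1 hc) hd
      · exact absurd ((aux7_finsupp_sub_eq_iff h).2 hd) hc
      · simp

lemma aux7_coeff_X_mul_pderiv (i : Fin 2) (q : P2) (m : Fin 2 →₀ ℕ) :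
    coeff m (X i * pderiv i q) = (m i : ℝ) * coeff m q := by
  rw [coeff_X_mul']
  split_ifs with h
  · rw [aux7_coeff_pderiv]
    have hm : 0 < m i := by
      simp only [Finsupp.mem_support_iff] at h; omega
    set d : Fin 2 →₀ ℕ := m - Finsupp.single i 1 with hd
    have h2 : d + Finsupp.single i 1 = m :=
      tsub_add_cancel_of_le (by rwa [Finsupp.single_le_iff])
    have h1 : (d i + 1 : ℕ) = m i := by
      rw [hd, Finsupp.tsub_apply, Finsupp.single_apply, if_pos rfl]; omega
    rw [h2, show ((d i : ℝ) + 1) = (m i : ℝ) by exact_mod_cast h1]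
  · have h0 : m i = 0 := by simpa [Finsupp.mem_support_iff] using h
    simp [h0]

/-- The Euler operator. -/
noncomputable def aux7E (q : P2) : P2 :=
  X 0 * pderiv (0 : Fin 2) q + X 1 * pderiv (1 : Fin 2) q

lemma aux7_coeff_E (q : P2) (m : Fin 2 →₀ ℕ) :
    coeff m (aux7E q) = ((m 0 + m 1 : ℕ) : ℝ) * coeff m q := by
  simp [aux7E, coeff_add, aux7_coeff_X_mul_pderiv]
  push_cast
  ring

lemma aux7_key_identity (q : P2) :
    pdivDiv (xxT q) = 6 * q + 5 * aux7E q + aux7E (aux7E q) := by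
  simp only [pdivDiv, xxT, aux7E, Fin.sum_univ_two, Matrix.of_apply, pderiv_mul, map_add,
    pderiv_X_self, pderiv_X_of_ne (show (0:Fin 2) ≠ 1 by decide),
    pderiv_X_of_ne (show (1:Fin 2) ≠ 0 by decide), pderiv_one, map_zero,
    mul_zero, zero_mul, mul_one, one_mul, add_zero, zero_add]
  ring

/-- The eigenvalue of `div div (x xᵀ ·)` on monomials of multidegree `m`. -/
def aux7c (m : Fin 2 →₀ ℕ) : ℕ := (m 0 + m 1 + 2) * (m 0 + m 1 + 3)

lemma aux7c_ne_zero (m : Fin 2 →₀ ℕ) : (aux7c m : ℝ) ≠ 0 := by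
  have : 0 < aux7c m := Nat.mul_pos (by omega) (by omega)
  exact_mod_cast this.ne'

lemma aux7_coeff_key (q : P2) (m : Fin 2 →₀ ℕ) :
    coeff m (pdivDiv (xxT q)) = (aux7c m : ℝ) * coeff m q := by
  rw [aux7_key_identity, (map_ofNat C 6).symm, (map_ofNat C 5).symm]
  simp only [coeff_add, coeff_C_mul, aux7_coeff_E, aux7c]
  push_cast
  ring

end auxStmt7

/-- `div div` is a bijection from `{x xᵀ q : deg q ≤ k−2}` onto
polynomials of degree ≤ k−2. -/
theorem stmt_7 (k : ℕ) (hk : 2 ≤ k) (p : P2) (hp : p.totalDegree ≤ k - 2) :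
    ∃! q : P2, q.totalDegree ≤ k - 2 ∧ pdivDiv (xxT q) = p := by
  classical
  set q : P2 := ∑ m ∈ p.support, monomial m (coeff m p / (aux7c m : ℝ)) with hq
  have hcq : ∀ d, coeff d q = coeff d p / (aux7c d : ℝ) := by
    intro d
    rw [hq, coeff_sum]
    simp only [coeff_monomial]
    rw [Finset.sum_ite_eq' p.support d]
    split_ifs with h
    · rfl
    · rw [MvPolynomial.notMem_support_iff.mp h, zero_div]
  have hdeg : q.totalDegree ≤ k - 2 := by
    refine (totalDegree_finset_sum _ _).trans (Finset.sup_le fun m hm => ?_)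
    refine (totalDegree_monomial_le _ _).trans (le_trans ?_ hp)
    exact le_totalDegree hm
  have heq : pdivDiv (xxT q) = p := by
    ext d
    rw [aux7_coeff_key, hcq, mul_div_cancel₀ _ (aux7c_ne_zero d)]
  refine ⟨q, ⟨hdeg, heq⟩, ?_⟩
  rintro q' ⟨-, heq'⟩
  ext d
  have h1 : (aux7c d : ℝ) * coeff d q' = coeff d p := by
    rw [← aux7_coeff_key, heq']
  have h2 : (aux7c d : ℝ) * coeff d q = coeff d p := by
    rw [← aux7_coeff_key, heq]
  exact mul_left_cancel₀ (aux7c_ne_zero d) (h1.trans h2.symm)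
end
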